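/- arXiv:2603.13704 — 2 statements merged into one kernel-verified Lean document; each statement's English description precedes it below -/
import Mathlib

section
/- Suppose E[κ_X(X,X)] < ∞, E[κ_Y(Y,Y)] < ∞, E[κ_Z(Z,Z)] < ∞, and that for every g ∈ G_X the function z ↦ E[g(X)|Z=z] has a version in G_Z, and for every g ∈ G_Y the function z ↦ E[g(Y)|Z=z] has a version in G_Z. Then the conditional covariance operator Σ_{XY|Z} = Σ_XY − Σ_XZ Σ_ZZ^† Σ_ZY admits the representation Σ_{XY|Z} = E[(κ̃_X(·,X) − E[κ̃_X(·,X)|Z]) ⊗ (κ̃_Y(·,Y) − E[κ̃_Y(·,Y)|Z])]. -/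
/-!
# Statement 3

Under the moment and conditional-expectation assumptions, the conditional
covariance operator `Σ_{XY|Z} = Σ_XY − Σ_XZ Σ_ZZ^† Σ_ZY` admits the
representation
`Σ_{XY|Z} = E[(κ̃_X(·,X) − E[κ̃_X(·,X)|Z]) ⊗ (κ̃_Y(·,Y) − E[κ̃_Y(·,Y)|Z])]`.
RKHSs are modelled through feature maps, the Moore–Penrose inverse through
the Penrose axioms, and the operator identity is stated pointwise.
-/

open MeasureTheory ProbabilityTheory Filter
open scoped RealInnerProductSpace

noncomputable section

/-- The rank-one operator `u ⊗ v : H₂ → H₁`, `w ↦ ⟪v, w⟫ u`. -/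
def rankOne {H1 H2 : Type*} [NormedAddCommGroup H1] [InnerProductSpace ℝ H1]
    [NormedAddCommGroup H2] [InnerProductSpace ℝ H2] (u : H1) (v : H2) : H2 →L[ℝ] H1 :=
  (innerSL ℝ v).smulRight u

variable {Ω : Type*} [MeasurableSpace Ω]

/-- The mean element `μ = E[k(·,X)] ∈ G` (Bochner integral). -/
def meanElem {H G : Type*} [NormedAddCommGroup G] [InnerProductSpace ℝ G] [CompleteSpace G]
    (P : Measure Ω) (k : H → G) (X : Ω → H) : G :=
  ∫ ω, k (X ω) ∂P

/-- The centered kernel section `κ̃(·,x) = κ(·,x) − μ`. -/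
def ctrKer {H G : Type*} [NormedAddCommGroup G] [InnerProductSpace ℝ G] [CompleteSpace G]
    (P : Measure Ω) (k : H → G) (X : Ω → H) (x : H) : G :=
  k x - meanElem P k X

/-- The (cross-)covariance operator `Σ_{XZ} = E[κ̃_X(·,X) ⊗ κ̃_Z(·,Z)] : G₂ → G₁`. -/
def crossCov {H1 G1 H2 G2 : Type*}
    [NormedAddCommGroup G1] [InnerProductSpace ℝ G1] [CompleteSpace G1]
    [NormedAddCommGroup G2] [InnerProductSpace ℝ G2] [CompleteSpace G2]
    (P : Measure Ω) (k1 : H1 → G1) (X : Ω → H1) (k2 : H2 → G2) (Z : Ω → H2) :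
    G2 →L[ℝ] G1 :=
  ∫ ω, rankOne (ctrKer P k1 X (X ω)) (ctrKer P k2 Z (Z ω)) ∂P

/-- The Penrose axioms characterizing the Moore–Penrose inverse `dag` of a
self-adjoint operator `C`. -/
def IsMoorePenroseInv {G : Type*} [NormedAddCommGroup G] [InnerProductSpace ℝ G]
    (C : G →L[ℝ] G) (dag : G →ₗ[ℝ] G) : Prop :=
  (∀ f, C (dag (C f)) = C f) ∧ (∀ f, dag (C (dag f)) = dag f) ∧
    (∀ f g, ⟪C (dag f), g⟫ = ⟪f, C (dag g)⟫) ∧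
    (∀ f g, ⟪dag (C f), g⟫ = ⟪f, dag (C g)⟫)


section Aux
set_option linter.unusedSectionVars false
variable {α : Type*} {mα : MeasurableSpace α}
variable {G1 G2 : Type*}
  [NormedAddCommGroup G1] [InnerProductSpace ℝ G1] [CompleteSpace G1]
  [NormedAddCommGroup G2] [InnerProductSpace ℝ G2] [CompleteSpace G2]

lemma rankOne_apply (u : G1) (v : G2) (w : G2) : rankOne u v w = ⟪v, w⟫ • u := rfl

lemma norm_rankOne_le (u : G1) (v : G2) : ‖rankOne u v‖ ≤ ‖u‖ * ‖v‖ := by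
  rw [rankOne, ContinuousLinearMap.norm_smulRight_apply, innerSL_apply_norm]
  rw [mul_comm]

lemma integrable_mul_of_memL2 {P : Measure α} {f g : α → ℝ}
    (hf : MemLp f 2 P) (hg : MemLp g 2 P) : Integrable (fun ω => f ω * g ω) P := by
  have h : MemLp (g • f) 1 P := MemLp.smul hf hg (hpqr := ⟨by simp [one_div, ENNReal.inv_two_add_inv_two]⟩)
  exact (memLp_one_iff_integrable.mp h).congr (by filter_upwards with ω; simp [mul_comm])

lemma continuous_rankOne : Continuous fun p : G1 × G2 => rankOne p.1 p.2 := by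
  have h1 : Continuous fun p : G1 × G2 =>
      (ContinuousLinearMap.smulRightL ℝ G2 G1 (innerSL ℝ p.2)) :=
    (ContinuousLinearMap.smulRightL ℝ G2 G1).continuous.comp
      ((innerSL ℝ).continuous.comp continuous_snd)
  exact h1.clm_apply continuous_fst

lemma integrable_rankOne {P : Measure α} [IsFiniteMeasure P] {φ : α → G1} {ψ : α → G2}
    (hφ : MemLp φ 2 P) (hψ : MemLp ψ 2 P) :
    Integrable (fun ω => rankOne (φ ω) (ψ ω)) P := by
  refine Integrable.mono' (integrable_mul_of_memL2 hφ.norm hψ.norm) ?_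
    (ae_of_all _ fun ω => norm_rankOne_le _ _)
  exact continuous_rankOne.comp_aestronglyMeasurable
    (hφ.aestronglyMeasurable.prodMk hψ.aestronglyMeasurable)

lemma inner_integral_rankOne {P : Measure α} [IsFiniteMeasure P] {φ : α → G1} {ψ : α → G2}
    (hφ : MemLp φ 2 P) (hψ : MemLp ψ 2 P) (f : G1) (w : G2) :
    ⟪f, (∫ ω, rankOne (φ ω) (ψ ω) ∂P) w⟫ = ∫ ω, ⟪φ ω, f⟫ * ⟪ψ ω, w⟫ ∂P := by
  rw [ContinuousLinearMap.integral_apply (integrable_rankOne hφ hψ)]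
  have hint : Integrable (fun ω => rankOne (φ ω) (ψ ω) w) P := by
    have h : MemLp ((fun ω => ⟪ψ ω, w⟫) • φ) 1 P :=
      MemLp.smul hφ (hψ.inner_const w) (hpqr := ⟨by simp [one_div, ENNReal.inv_two_add_inv_two]⟩)
    exact (memLp_one_iff_integrable.mp h).congr (by filter_upwards with ω; simp [rankOne_apply])
  rw [← integral_inner hint f]
  congr 1; funext ω
  rw [rankOne_apply, real_inner_smul_right, mul_comm, real_inner_comm]

lemma memL2_of_inner_self {P : Measure α} {f : α → G1}
    (hf : AEStronglyMeasurable f P) (h : Integrable (fun ω => ⟪f ω, f ω⟫) P) :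
    MemLp f 2 P := by
  rw [memLp_two_iff_integrable_sq_norm hf]
  exact h.congr (ae_of_all _ fun ω => by simp [real_inner_self_eq_norm_sq])

lemma integral_mul_eq_of_condexp {m m0 : MeasurableSpace α} (hm : m ≤ m0) {P : Measure α}
    [IsProbabilityMeasure P] {A B Bh : α → ℝ} (hA : StronglyMeasurable[m] A)
    (hA2 : MemLp A 2 P) (hB2 : MemLp B 2 P) (hBh : Bh =ᵐ[P] condExp m P B) :
    ∫ ω, A ω * B ω ∂P = ∫ ω, A ω * Bh ω ∂P := by
  haveI : SigmaFinite (P.trim hm) := by infer_instance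
  have hAB : Integrable (fun ω => A ω * B ω) P := integrable_mul_of_memL2 hA2 hB2
  have h1 := condExp_mul_of_stronglyMeasurable_left (μ := P) hA hAB (hB2.integrable one_le_two)
  calc ∫ ω, A ω * B ω ∂P = ∫ ω, (condExp m P (A * B)) ω ∂P :=
        (integral_condExp hm (f := A * B)).symm
    _ = ∫ ω, A ω * Bh ω ∂P := by
        refine integral_congr_ae ?_
        filter_upwards [h1, hBh] with ω h1 h2
        simp only [Pi.mul_apply] at h1 ⊢
        rw [h1, h2]

lemma condexp_inner_ae {m m0 : MeasurableSpace α} (hm : m ≤ m0) {P : Measure α}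
    [IsProbabilityMeasure P] {φ : α → G1} (hφ : Integrable φ P) (c : G1) :
    (fun ω => ⟪(condExp m P φ) ω, c⟫) =ᵐ[P] condExp m P (fun ω => ⟪φ ω, c⟫) := by
  haveI : SigmaFinite (P.trim hm) := by infer_instance
  refine ae_eq_condExp_of_forall_setIntegral_eq hm (hφ.inner_const c)
    (fun s _ _ => (integrable_condExp.inner_const c).integrableOn) (fun s hs hμs => ?_) ?_
  · show ∫ x in s, ⟪(condExp m P φ) x, c⟫ ∂P = ∫ x in s, ⟪φ x, c⟫ ∂P
    calc ∫ x in s, ⟪(condExp m P φ) x, c⟫ ∂P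
        = ∫ x in s, ⟪c, (condExp m P φ) x⟫ ∂P :=
          integral_congr_ae (ae_of_all _ fun x => real_inner_comm _ _)
      _ = ⟪c, ∫ x in s, (condExp m P φ) x ∂P⟫ :=
          integral_inner integrable_condExp.integrableOn c
      _ = ⟪c, ∫ x in s, φ x ∂P⟫ := by rw [setIntegral_condExp hm hφ hs]
      _ = ∫ x in s, ⟪c, φ x⟫ ∂P := (integral_inner hφ.integrableOn c).symm
      _ = ∫ x in s, ⟪φ x, c⟫ ∂P :=
          integral_congr_ae (ae_of_all _ fun x => real_inner_comm _ _)
  · have h : StronglyMeasurable[m] (fun ω => ⟪(condExp m P φ) ω, c⟫) :=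
      stronglyMeasurable_condExp.inner stronglyMeasurable_const
    exact h.aestronglyMeasurable

lemma condexp_memL2 {m m0 : MeasurableSpace α} (hm : m ≤ m0) {P : Measure α}
    [IsProbabilityMeasure P] {φ : α → G1} (hφ : MemLp φ 2 P) :
    MemLp (condExp m P φ) 2 P := by
  haveI : SigmaFinite (P.trim hm) := by infer_instance
  set Φ := hφ.toLp φ with hΦ
  have hae : condExp m P φ =ᵐ[P] ((condExpL2 G1 ℝ hm Φ : Lp G1 2 P) : α → G1) := by
    refine (ae_eq_condExp_of_forall_setIntegral_eq hm (hφ.integrable one_le_two)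
      (fun s _ _ => ((Lp.memLp _).integrable one_le_two).integrableOn)
      (fun s hs hμs => ?_) ?_).symm
    · rw [integral_condExpL2_eq hm Φ hs hμs.ne]
      exact setIntegral_congr_ae (hm s hs) ((hφ.coeFn_toLp).mono fun x hx _ => hx)
    · exact lpMeas.aestronglyMeasurable _
  exact (Lp.memLp _).ae_eq hae.symm

lemma centered_condexp_rep {m m0 : MeasurableSpace α} (hm : m ≤ m0) {P : Measure α}
    [IsProbabilityMeasure P] {U : α → G1} {W : α → G2}
    (hU : Integrable U P) (hW : Integrable W P) (f : G1) (h : G2)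
    (hh : (fun ω => ⟪W ω, h⟫) =ᵐ[P] condExp m P (fun ω => ⟪U ω, f⟫)) :
    (fun ω => ⟪W ω - ∫ ω', W ω' ∂P, h⟫) =ᵐ[P]
      condExp m P (fun ω => ⟪U ω - ∫ ω', U ω' ∂P, f⟫) := by
  haveI : SigmaFinite (P.trim hm) := by infer_instance
  have hc : ⟪∫ ω', W ω' ∂P, h⟫ = ⟪∫ ω', U ω' ∂P, f⟫ := by
    have e1 : ⟪∫ ω', W ω' ∂P, h⟫ = ∫ ω, ⟪W ω, h⟫ ∂P := by
      rw [real_inner_comm, ← integral_inner hW h]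
      exact integral_congr_ae (ae_of_all _ fun ω => real_inner_comm _ _)
    have e3 : ⟪∫ ω', U ω' ∂P, f⟫ = ∫ ω, ⟪U ω, f⟫ ∂P := by
      rw [real_inner_comm, ← integral_inner hU f]
      exact integral_congr_ae (ae_of_all _ fun ω => real_inner_comm _ _)
    rw [e1, e3, integral_congr_ae hh, integral_condExp hm]
  have hrw : (fun ω => ⟪U ω - ∫ ω', U ω' ∂P, f⟫) =
      (fun ω => ⟪U ω, f⟫) - (fun _ => ⟪∫ ω', U ω' ∂P, f⟫) :=
    funext fun ω => by simp [inner_sub_left]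
  rw [hrw]
  refine EventuallyEq.trans ?_ (condExp_sub (hU.inner_const f) (integrable_const _) m).symm
  rw [condExp_const hm]
  filter_upwards [hh] with ω hω
  simp only [Pi.sub_apply]
  rw [inner_sub_left, hω, hc]

end Aux

theorem statement3
    (P : Measure Ω) [IsProbabilityMeasure P]
    {HX HY HZ GX GY GZ : Type*}
    [NormedAddCommGroup HX] [InnerProductSpace ℝ HX] [CompleteSpace HX]
    [SecondCountableTopology HX] [MeasurableSpace HX] [BorelSpace HX]
    [NormedAddCommGroup HY] [InnerProductSpace ℝ HY] [CompleteSpace HY]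
    [SecondCountableTopology HY] [MeasurableSpace HY] [BorelSpace HY]
    [NormedAddCommGroup HZ] [InnerProductSpace ℝ HZ] [CompleteSpace HZ]
    [SecondCountableTopology HZ] [MeasurableSpace HZ] [BorelSpace HZ]
    [NormedAddCommGroup GX] [InnerProductSpace ℝ GX] [CompleteSpace GX]
    [SecondCountableTopology GX] [MeasurableSpace GX] [BorelSpace GX]
    [NormedAddCommGroup GY] [InnerProductSpace ℝ GY] [CompleteSpace GY]
    [SecondCountableTopology GY] [MeasurableSpace GY] [BorelSpace GY]
    [NormedAddCommGroup GZ] [InnerProductSpace ℝ GZ] [CompleteSpace GZ]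
    [SecondCountableTopology GZ] [MeasurableSpace GZ] [BorelSpace GZ]
    (X : Ω → HX) (Y : Ω → HY) (Z : Ω → HZ)
    (hX : Measurable X) (hY : Measurable Y) (hZ : Measurable Z)
    (kX : HX → GX) (kY : HY → GY) (kZ : HZ → GZ)
    (hkX : Measurable kX) (hkY : Measurable kY) (hkZ : Measurable kZ)
    (hdX : (Submodule.span ℝ (Set.range kX)).topologicalClosure = ⊤)
    (hdY : (Submodule.span ℝ (Set.range kY)).topologicalClosure = ⊤)
    (hdZ : (Submodule.span ℝ (Set.range kZ)).topologicalClosure = ⊤)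
    (hmX : Integrable (fun ω => ⟪kX (X ω), kX (X ω)⟫) P)
    (hmY : Integrable (fun ω => ⟪kY (Y ω), kY (Y ω)⟫) P)
    (hmZ : Integrable (fun ω => ⟪kZ (Z ω), kZ (Z ω)⟫) P)
    (hCEX : ∀ g : GX, ∃ h : GZ,
      (fun ω => ⟪kZ (Z ω), h⟫) =ᵐ[P]
        condExp (MeasurableSpace.comap Z inferInstance) P (fun ω => ⟪kX (X ω), g⟫))
    (hCEY : ∀ g : GY, ∃ h : GZ,
      (fun ω => ⟪kZ (Z ω), h⟫) =ᵐ[P]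
        condExp (MeasurableSpace.comap Z inferInstance) P (fun ω => ⟪kY (Y ω), g⟫))
    (dag : GZ →ₗ[ℝ] GZ)
    (hdag : IsMoorePenroseInv (crossCov P kZ Z kZ Z) dag) :
    -- Σ_{XY|Z} = E[(κ̃_X(·,X) − E[κ̃_X(·,X)|Z]) ⊗ (κ̃_Y(·,Y) − E[κ̃_Y(·,Y)|Z])]
    ∀ v : GY,
      crossCov P kX X kY Y v - crossCov P kX X kZ Z (dag (crossCov P kZ Z kY Y v))
        = (∫ ω, rankOne
            (ctrKer P kX X (X ω) -
              condExp (MeasurableSpace.comap Z inferInstance) P (fun ω' => ctrKer P kX X (X ω')) ω)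
            (ctrKer P kY Y (Y ω) -
              condExp (MeasurableSpace.comap Z inferInstance) P (fun ω' => ctrKer P kY Y (Y ω')) ω)
            ∂P) v := by
  intro v
  apply ext_inner_left ℝ
  intro f
  have hm : MeasurableSpace.comap Z inferInstance ≤ _ := hZ.comap_le
  haveI : SigmaFinite (P.trim hm) := by infer_instance
  -- L² facts for the feature maps
  have hkX2 : MemLp (fun ω => kX (X ω)) 2 P :=
    memL2_of_inner_self ((hkX.comp hX).stronglyMeasurable.aestronglyMeasurable) hmX
  have hkY2 : MemLp (fun ω => kY (Y ω)) 2 P :=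
    memL2_of_inner_self ((hkY.comp hY).stronglyMeasurable.aestronglyMeasurable) hmY
  have hkZ2 : MemLp (fun ω => kZ (Z ω)) 2 P :=
    memL2_of_inner_self ((hkZ.comp hZ).stronglyMeasurable.aestronglyMeasurable) hmZ
  have hφ2 : MemLp (fun ω => ctrKer P kX X (X ω)) 2 P := hkX2.sub (memLp_const _)
  have hψ2 : MemLp (fun ω => ctrKer P kY Y (Y ω)) 2 P := hkY2.sub (memLp_const _)
  have hζ2 : MemLp (fun ω => ctrKer P kZ Z (Z ω)) 2 P := hkZ2.sub (memLp_const _)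
  have hφint : Integrable (fun ω => ctrKer P kX X (X ω)) P := hφ2.integrable one_le_two
  have hψint : Integrable (fun ω => ctrKer P kY Y (Y ω)) P := hψ2.integrable one_le_two
  -- (MeasurableSpace.comap Z inferInstance)-measurability of ⟪ζ, u⟫
  have hZm : Measurable[MeasurableSpace.comap Z inferInstance] Z := fun s hs => ⟨s, hs, rfl⟩
  have hζm : ∀ u : GZ, StronglyMeasurable[MeasurableSpace.comap Z inferInstance] (fun ω => ⟪ctrKer P kZ Z (Z ω), u⟫) := by
    intro u
    have h1 : Measurable (fun z : HZ => ⟪ctrKer P kZ Z z, u⟫) :=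
      (hkZ.sub measurable_const).inner (measurable_const (a := u))
    exact (h1.comp hZm).stronglyMeasurable
  -- conditional representers (centered)
  obtain ⟨hf, hhf⟩ := hCEX f
  obtain ⟨hg, hhg⟩ := hCEY v
  have hFhat : (fun ω => ⟪ctrKer P kZ Z (Z ω), hf⟫) =ᵐ[P]
      condExp (MeasurableSpace.comap Z inferInstance) P (fun ω => ⟪ctrKer P kX X (X ω), f⟫) :=
    centered_condexp_rep hm (hkX2.integrable one_le_two) (hkZ2.integrable one_le_two) f hf hhf
  have hGhat : (fun ω => ⟪ctrKer P kZ Z (Z ω), hg⟫) =ᵐ[P]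
      condExp (MeasurableSpace.comap Z inferInstance) P (fun ω => ⟪ctrKer P kY Y (Y ω), v⟫) :=
    centered_condexp_rep hm (hkY2.integrable one_le_two) (hkZ2.integrable one_le_two) v hg hhg
  -- (a) Σ_ZY v = Σ_ZZ hg
  have hZZ : ∀ a b : GZ, ⟪a, crossCov P kZ Z kZ Z b⟫
      = ∫ ω, ⟪ctrKer P kZ Z (Z ω), a⟫ * ⟪ctrKer P kZ Z (Z ω), b⟫ ∂P := fun a b =>
    inner_integral_rankOne hζ2 hζ2 a b
  have hZY : crossCov P kZ Z kY Y v = crossCov P kZ Z kZ Z hg := by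
    refine ext_inner_left ℝ fun u => ?_
    have l1 : ⟪u, crossCov P kZ Z kY Y v⟫
        = ∫ ω, ⟪ctrKer P kZ Z (Z ω), u⟫ * ⟪ctrKer P kY Y (Y ω), v⟫ ∂P :=
      inner_integral_rankOne hζ2 hψ2 u v
    rw [l1, hZZ u hg]
    exact integral_mul_eq_of_condexp hm (hζm u) (hζ2.inner_const u) (hψ2.inner_const v) hGhat
  -- (b) ⟪f, Σ_XZ w⟫ = ⟪Σ_ZZ hf, w⟫
  have hXZ : ∀ w : GZ, ⟪f, crossCov P kX X kZ Z w⟫ = ⟪crossCov P kZ Z kZ Z hf, w⟫ := by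
    intro w
    have l1 : ⟪f, crossCov P kX X kZ Z w⟫
        = ∫ ω, ⟪ctrKer P kX X (X ω), f⟫ * ⟪ctrKer P kZ Z (Z ω), w⟫ ∂P :=
      inner_integral_rankOne hφ2 hζ2 f w
    have l2 : ⟪crossCov P kZ Z kZ Z hf, w⟫
        = ∫ ω, ⟪ctrKer P kZ Z (Z ω), w⟫ * ⟪ctrKer P kZ Z (Z ω), hf⟫ ∂P := by
      rw [real_inner_comm]; exact hZZ w hf
    rw [l1, l2]
    calc ∫ ω, ⟪ctrKer P kX X (X ω), f⟫ * ⟪ctrKer P kZ Z (Z ω), w⟫ ∂P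
        = ∫ ω, ⟪ctrKer P kZ Z (Z ω), w⟫ * ⟪ctrKer P kX X (X ω), f⟫ ∂P :=
          integral_congr_ae (ae_of_all _ fun ω => mul_comm _ _)
      _ = ∫ ω, ⟪ctrKer P kZ Z (Z ω), w⟫ * ⟪ctrKer P kZ Z (Z ω), hf⟫ ∂P :=
          integral_mul_eq_of_condexp hm (hζm w) (hζ2.inner_const w) (hφ2.inner_const f) hFhat
  -- (c) self-adjointness of Σ_ZZ
  have hsa : ∀ a b : GZ, ⟪crossCov P kZ Z kZ Z a, b⟫ = ⟪a, crossCov P kZ Z kZ Z b⟫ := by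
    intro a b
    rw [real_inner_comm]; rw [hZZ b a, hZZ a b]
    exact integral_congr_ae (ae_of_all _ fun ω => mul_comm _ _)
  -- Term 2
  have hterm2 : ⟪f, crossCov P kX X kZ Z (dag (crossCov P kZ Z kY Y v))⟫
      = ∫ ω, ⟪ctrKer P kZ Z (Z ω), hf⟫ * ⟪ctrKer P kZ Z (Z ω), hg⟫ ∂P := by
    rw [hZY, hXZ _, hsa, hdag.1, hZZ hf hg]
  -- Term 1
  have hterm1 : ⟪f, crossCov P kX X kY Y v⟫
      = ∫ ω, ⟪ctrKer P kX X (X ω), f⟫ * ⟪ctrKer P kY Y (Y ω), v⟫ ∂P := by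
    exact inner_integral_rankOne hφ2 hψ2 f v
  -- RHS
  have hφhat2 : MemLp (condExp (MeasurableSpace.comap Z inferInstance) P (fun ω' => ctrKer P kX X (X ω'))) 2 P :=
    condexp_memL2 hm hφ2
  have hψhat2 : MemLp (condExp (MeasurableSpace.comap Z inferInstance) P (fun ω' => ctrKer P kY Y (Y ω'))) 2 P :=
    condexp_memL2 hm hψ2
  have hd2 : MemLp (fun ω => ctrKer P kX X (X ω)
      - condExp (MeasurableSpace.comap Z inferInstance) P (fun ω' => ctrKer P kX X (X ω')) ω) 2 P := hφ2.sub hφhat2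
  have he2 : MemLp (fun ω => ctrKer P kY Y (Y ω)
      - condExp (MeasurableSpace.comap Z inferInstance) P (fun ω' => ctrKer P kY Y (Y ω')) ω) 2 P := hψ2.sub hψhat2
  have hRHS1 : ⟪f, (∫ ω, rankOne
      (ctrKer P kX X (X ω) - condExp (MeasurableSpace.comap Z inferInstance) P (fun ω' => ctrKer P kX X (X ω')) ω)
      (ctrKer P kY Y (Y ω) - condExp (MeasurableSpace.comap Z inferInstance) P (fun ω' => ctrKer P kY Y (Y ω')) ω) ∂P) v⟫
      = ∫ ω, ⟪ctrKer P kX X (X ω) - condExp (MeasurableSpace.comap Z inferInstance) P (fun ω' => ctrKer P kX X (X ω')) ω, f⟫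
          * ⟪ctrKer P kY Y (Y ω) - condExp (MeasurableSpace.comap Z inferInstance) P (fun ω' => ctrKer P kY Y (Y ω')) ω, v⟫ ∂P :=
    inner_integral_rankOne hd2 he2 f v
  -- rewrite integrand a.e. with centered representers
  have hφinner := condexp_inner_ae hm hφint f
  have hψinner := condexp_inner_ae hm hψint v
  have hRHS2 : ∫ ω, ⟪ctrKer P kX X (X ω) - condExp (MeasurableSpace.comap Z inferInstance) P (fun ω' => ctrKer P kX X (X ω')) ω, f⟫
          * ⟪ctrKer P kY Y (Y ω) - condExp (MeasurableSpace.comap Z inferInstance) P (fun ω' => ctrKer P kY Y (Y ω')) ω, v⟫ ∂P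
      = ∫ ω, (⟪ctrKer P kX X (X ω), f⟫ - ⟪ctrKer P kZ Z (Z ω), hf⟫)
          * (⟪ctrKer P kY Y (Y ω), v⟫ - ⟪ctrKer P kZ Z (Z ω), hg⟫) ∂P := by
    refine integral_congr_ae ?_
    filter_upwards [hφinner, hψinner, hFhat, hGhat] with ω h1 h2 h3 h4
    rw [inner_sub_left, inner_sub_left, h1, h2, ← h3, ← h4]
  -- expand and simplify
  have hRHS3 : ∫ ω, (⟪ctrKer P kX X (X ω), f⟫ - ⟪ctrKer P kZ Z (Z ω), hf⟫)
          * (⟪ctrKer P kY Y (Y ω), v⟫ - ⟪ctrKer P kZ Z (Z ω), hg⟫) ∂P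
      = (∫ ω, ⟪ctrKer P kX X (X ω), f⟫ * ⟪ctrKer P kY Y (Y ω), v⟫ ∂P)
        - ∫ ω, ⟪ctrKer P kZ Z (Z ω), hf⟫ * ⟪ctrKer P kZ Z (Z ω), hg⟫ ∂P := by
    have hF2 : MemLp (fun ω => ⟪ctrKer P kX X (X ω), f⟫) 2 P := hφ2.inner_const f
    have hG2 : MemLp (fun ω => ⟪ctrKer P kY Y (Y ω), v⟫) 2 P := hψ2.inner_const v
    have hFh2 : MemLp (fun ω => ⟪ctrKer P kZ Z (Z ω), hf⟫) 2 P := hζ2.inner_const hf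
    have hGh2 : MemLp (fun ω => ⟪ctrKer P kZ Z (Z ω), hg⟫) 2 P := hζ2.inner_const hg
    have iFG : Integrable (fun ω => ⟪ctrKer P kX X (X ω), f⟫ * ⟪ctrKer P kY Y (Y ω), v⟫) P :=
      integrable_mul_of_memL2 hF2 hG2
    have iFhG : Integrable (fun ω => ⟪ctrKer P kZ Z (Z ω), hf⟫ * ⟪ctrKer P kY Y (Y ω), v⟫) P :=
      integrable_mul_of_memL2 hFh2 hG2
    have iFGh : Integrable (fun ω => ⟪ctrKer P kX X (X ω), f⟫ * ⟪ctrKer P kZ Z (Z ω), hg⟫) P :=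
      integrable_mul_of_memL2 hF2 hGh2
    have iFhGh : Integrable (fun ω => ⟪ctrKer P kZ Z (Z ω), hf⟫ * ⟪ctrKer P kZ Z (Z ω), hg⟫) P :=
      integrable_mul_of_memL2 hFh2 hGh2
    have expand : ∀ ω, (⟪ctrKer P kX X (X ω), f⟫ - ⟪ctrKer P kZ Z (Z ω), hf⟫)
          * (⟪ctrKer P kY Y (Y ω), v⟫ - ⟪ctrKer P kZ Z (Z ω), hg⟫)
        = ⟪ctrKer P kX X (X ω), f⟫ * ⟪ctrKer P kY Y (Y ω), v⟫
          - ⟪ctrKer P kZ Z (Z ω), hf⟫ * ⟪ctrKer P kY Y (Y ω), v⟫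
          - ⟪ctrKer P kX X (X ω), f⟫ * ⟪ctrKer P kZ Z (Z ω), hg⟫
          + ⟪ctrKer P kZ Z (Z ω), hf⟫ * ⟪ctrKer P kZ Z (Z ω), hg⟫ := fun ω => by ring
    rw [integral_congr_ae (ae_of_all _ expand)]
    have i1 : Integrable (fun ω => ⟪ctrKer P kX X (X ω), f⟫ * ⟪ctrKer P kY Y (Y ω), v⟫
        - ⟪ctrKer P kZ Z (Z ω), hf⟫ * ⟪ctrKer P kY Y (Y ω), v⟫) P := iFG.sub iFhG
    have i2 : Integrable (fun ω => (⟪ctrKer P kX X (X ω), f⟫ * ⟪ctrKer P kY Y (Y ω), v⟫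
        - ⟪ctrKer P kZ Z (Z ω), hf⟫ * ⟪ctrKer P kY Y (Y ω), v⟫)
        - ⟪ctrKer P kX X (X ω), f⟫ * ⟪ctrKer P kZ Z (Z ω), hg⟫) P := i1.sub iFGh
    rw [integral_add i2 iFhGh, integral_sub i1 iFGh, integral_sub iFG iFhG]
    have e1 : ∫ ω, ⟪ctrKer P kZ Z (Z ω), hf⟫ * ⟪ctrKer P kY Y (Y ω), v⟫ ∂P
        = ∫ ω, ⟪ctrKer P kZ Z (Z ω), hf⟫ * ⟪ctrKer P kZ Z (Z ω), hg⟫ ∂P :=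
      integral_mul_eq_of_condexp hm (hζm hf) hFh2 hG2 hGhat
    have e2 : ∫ ω, ⟪ctrKer P kX X (X ω), f⟫ * ⟪ctrKer P kZ Z (Z ω), hg⟫ ∂P
        = ∫ ω, ⟪ctrKer P kZ Z (Z ω), hf⟫ * ⟪ctrKer P kZ Z (Z ω), hg⟫ ∂P := by
      rw [integral_congr_ae (ae_of_all _ fun ω => mul_comm _ _)]
      rw [integral_mul_eq_of_condexp hm (hζm hg) hGh2 hF2 hFhat]
      exact integral_congr_ae (ae_of_all _ fun ω => mul_comm _ _)
    rw [e1, e2]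
    ring
  rw [inner_sub_right, hterm1, hterm2, hRHS1, hRHS2, hRHS3]
end
end

section
/- Suppose E[κ_X(X,X)] < ∞, E[κ_Y(Y,Y)] < ∞, E[κ_Z(Z,Z)] < ∞, and that for every g ∈ G_X the function z ↦ E[g(X)|Z=z] has a version in G_Z, and for every g ∈ G_Y the function z ↦ E[g(Y)|Z=z] has a version in G_Z. Then for every f ∈ G_X and g ∈ G_Y, ⟨f, Σ_{XY|Z} g⟩_{G_X} = E{ Cov[f(X), g(Y) | Z] }, where Cov[f(X),g(Y)|Z] = E[f(X)g(Y)|Z] − E[f(X)|Z]·E[g(Y)|Z]. -/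
/-!
# Statement 5

Under the moment and conditional-expectation assumptions, for every
`f ∈ G_X` and `g ∈ G_Y`,
`⟪f, Σ_{XY|Z} g⟫ = E{ Cov[f(X), g(Y) | Z] }`, where
`Cov[f(X),g(Y)|Z] = E[f(X)g(Y)|Z] − E[f(X)|Z]·E[g(Y)|Z]` and
`Σ_{XY|Z} = Σ_XY − Σ_XZ Σ_ZZ^† Σ_ZY`.
-/

open MeasureTheory ProbabilityTheory Filter
open scoped RealInnerProductSpace

noncomputable section

variable {Ω : Type*} [MeasurableSpace Ω]

section Aux

lemma norm_rankOne {H1 H2 : Type*} [NormedAddCommGroup H1] [InnerProductSpace ℝ H1]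
    [NormedAddCommGroup H2] [InnerProductSpace ℝ H2] (u : H1) (v : H2) :
    ‖rankOne u v‖ = ‖v‖ * ‖u‖ := by
  rw [rankOne, ContinuousLinearMap.norm_smulRight_apply, innerSL_apply_norm]

lemma mul_int (P : Measure Ω)
    (f g : Ω → ℝ) (hf : MemLp f 2 P) (hg : MemLp g 2 P) :
    Integrable (fun ω => f ω * g ω) P := by
  have h := hf.smul hg (r := 1)
  rw [memLp_one_iff_integrable] at h
  simpa [smul_eq_mul, mul_comm, Pi.mul_def] using h

/-- `MemLp 2` from integrability of the kernel diagonal. -/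
lemma mem2 {H G : Type*} [MeasurableSpace H]
    [NormedAddCommGroup G] [InnerProductSpace ℝ G]
    [SecondCountableTopology G] [MeasurableSpace G] [BorelSpace G]
    (P : Measure Ω) (k : H → G) (X : Ω → H) (hk : Measurable k) (hX : Measurable X)
    (hm : Integrable (fun ω => ⟪k (X ω), k (X ω)⟫) P) :
    MemLp (fun ω => k (X ω)) 2 P := by
  have hmeas : AEStronglyMeasurable (fun ω => k (X ω)) P :=
    ((hk.comp hX).stronglyMeasurable).aestronglyMeasurable
  rw [memLp_two_iff_integrable_sq_norm hmeas]
  refine hm.congr (Eventually.of_forall fun ω => ?_)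
  simp [real_inner_self_eq_norm_sq]

lemma mem2_inner {G : Type*} [NormedAddCommGroup G] [InnerProductSpace ℝ G]
    {P : Measure Ω} {u : Ω → G} (h : MemLp u 2 P) (f : G) :
    MemLp (fun ω => ⟪u ω, f⟫) 2 P := by
  have h' : MemLp (fun ω => (⟪f, u ω⟫ : ℝ)) 2 P := MemLp.const_inner (𝕜 := ℝ) f h
  simpa [real_inner_comm] using h'

lemma aesm_rankOne {G1 G2 : Type*}
    [NormedAddCommGroup G1] [InnerProductSpace ℝ G1] [CompleteSpace G1]
    [NormedAddCommGroup G2] [InnerProductSpace ℝ G2] [CompleteSpace G2]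
    {P : Measure Ω} {u : Ω → G1} {v : Ω → G2}
    (hu : AEStronglyMeasurable u P) (hv : AEStronglyMeasurable v P) :
    AEStronglyMeasurable (fun ω => rankOne (u ω) (v ω)) P := by
  have hcont : Continuous fun p : G1 × G2 => rankOne p.1 p.2 := by
    have : (fun p : G1 × G2 => rankOne p.1 p.2)
        = fun p : G1 × G2 =>
            ((ContinuousLinearMap.smulRightL ℝ G2 G1).flip p.1) (innerSL ℝ p.2) := by
      ext p w; simp [rankOne, ContinuousLinearMap.smulRightL]
    rw [this]
    exact isBoundedBilinearMap_apply.continuous.comp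
      ((((ContinuousLinearMap.smulRightL ℝ G2 G1).flip.continuous).comp continuous_fst).prodMk
        ((innerSL ℝ).continuous.comp continuous_snd))
  exact hcont.comp_aestronglyMeasurable (hu.prodMk hv)

lemma integrable_rankOne_s5 {G1 G2 : Type*}
    [NormedAddCommGroup G1] [InnerProductSpace ℝ G1] [CompleteSpace G1]
    [NormedAddCommGroup G2] [InnerProductSpace ℝ G2] [CompleteSpace G2]
    {P : Measure Ω} {u : Ω → G1} {v : Ω → G2}
    (hu : MemLp u 2 P) (hv : MemLp v 2 P) :
    Integrable (fun ω => rankOne (u ω) (v ω)) P := by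
  refine Integrable.mono' (mul_int P _ _ hv.norm hu.norm)
    (aesm_rankOne hu.aestronglyMeasurable hv.aestronglyMeasurable)
    (Eventually.of_forall fun ω => ?_)
  rw [norm_rankOne]

lemma inner_crossCov {H1 G1 H2 G2 : Type*}
    [NormedAddCommGroup G1] [InnerProductSpace ℝ G1] [CompleteSpace G1]
    [NormedAddCommGroup G2] [InnerProductSpace ℝ G2] [CompleteSpace G2]
    (P : Measure Ω) [IsProbabilityMeasure P]
    {k1 : H1 → G1} {X : Ω → H1} {k2 : H2 → G2} {Y : Ω → H2}
    (h1 : MemLp (fun ω => k1 (X ω)) 2 P) (h2 : MemLp (fun ω => k2 (Y ω)) 2 P)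
    (f : G1) (g : G2) :
    ⟪f, crossCov P k1 X k2 Y g⟫ = (∫ ω, ⟪k1 (X ω), f⟫ * ⟪k2 (Y ω), g⟫ ∂P)
      - (∫ ω, ⟪k1 (X ω), f⟫ ∂P) * ∫ ω, ⟪k2 (Y ω), g⟫ ∂P := by
  set u : Ω → G1 := fun ω => ctrKer P k1 X (X ω) with hu_def
  set v : Ω → G2 := fun ω => ctrKer P k2 Y (Y ω) with hv_def
  have hu : MemLp u 2 P := h1.sub (memLp_const _)
  have hv : MemLp v 2 P := h2.sub (memLp_const _)
  have hF : Integrable (fun ω => rankOne (u ω) (v ω)) P := integrable_rankOne_s5 hu hv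
  set a : Ω → ℝ := fun ω => ⟪k1 (X ω), f⟫ with ha_def
  set b : Ω → ℝ := fun ω => ⟪k2 (Y ω), g⟫ with hb_def
  have ha2 : MemLp a 2 P := mem2_inner h1 f
  have hb2 : MemLp b 2 P := mem2_inner h2 g
  have ha1 : Integrable a P := ha2.integrable one_le_two
  have hb1 : Integrable b P := hb2.integrable one_le_two
  have hab : Integrable (fun ω => a ω * b ω) P := mul_int P a b ha2 hb2
  set A : ℝ := ∫ ω, a ω ∂P with hA_def
  set B : ℝ := ∫ ω, b ω ∂P with hB_def
  have hμ1 : ⟪f, meanElem P k1 X⟫ = A := by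
    rw [meanElem, ← integral_inner (h1.integrable one_le_two) f, hA_def]
    simp only [ha_def, real_inner_comm]
  have hμ2 : ⟪meanElem P k2 Y, g⟫ = B := by
    rw [real_inner_comm, meanElem, ← integral_inner (h2.integrable one_le_two) g, hB_def]
    simp only [hb_def, real_inner_comm]
  have hpt : ∀ ω, ⟪f, rankOne (u ω) (v ω) g⟫ = (b ω - B) * (a ω - A) := by
    intro ω
    have : rankOne (u ω) (v ω) g = ⟪v ω, g⟫ • u ω := by
      simp [rankOne]
    rw [this, real_inner_smul_right]
    have h1' : ⟪v ω, g⟫ = b ω - B := by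
      rw [hv_def]; simp only [ctrKer, inner_sub_left, hμ2]; rfl
    have h2' : ⟪f, u ω⟫ = a ω - A := by
      rw [hu_def]; simp only [ctrKer, inner_sub_right, hμ1]
      rw [real_inner_comm]
    rw [h1', h2']
  have hFg : Integrable (fun ω => rankOne (u ω) (v ω) g) P := by
    have hsc : MemLp (fun ω => ⟪v ω, g⟫) 2 P := mem2_inner hv g
    have h := hu.smul hsc (r := 1)
    rw [memLp_one_iff_integrable] at h
    refine h.congr (Eventually.of_forall fun ω => ?_)
    simp [rankOne]
  have key : ⟪f, crossCov P k1 X k2 Y g⟫ = ∫ ω, (b ω - B) * (a ω - A) ∂P := by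
    rw [crossCov, ContinuousLinearMap.integral_apply hF g, ← integral_inner hFg f]
    exact integral_congr_ae (Eventually.of_forall hpt)
  have hfin : ∫ ω, (b ω - B) * (a ω - A) ∂P = (∫ ω, a ω * b ω ∂P) - A * B := by
    have h1' : Integrable (fun ω => A * b ω) P := hb1.const_mul A
    have h2' : Integrable (fun ω => B * a ω) P := ha1.const_mul B
    calc ∫ ω, (b ω - B) * (a ω - A) ∂P
        = ∫ ω, (a ω * b ω - A * b ω) - (B * a ω - A * B) ∂P := by
          congr 1; funext ω; ring
      _ = (∫ ω, a ω * b ω - A * b ω ∂P) - ∫ ω, B * a ω - A * B ∂P :=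
          integral_sub (hab.sub h1') (h2'.sub (integrable_const _))
      _ = ((∫ ω, a ω * b ω ∂P) - ∫ ω, A * b ω ∂P)
            - ((∫ ω, B * a ω ∂P) - ∫ ω, (A * B : ℝ) ∂P) := by
          rw [integral_sub hab h1', integral_sub h2' (integrable_const _)]
      _ = (∫ ω, a ω * b ω ∂P) - A * B := by
          rw [integral_const_mul, integral_const_mul, integral_const]
          simp only [measure_univ, probReal_univ, ENNReal.toReal_one, smul_eq_mul, one_mul, mul_one]
          ring
  rw [key, hfin]

/-- Transfer integrals through a conditional-expectation version in the RKHS. -/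
lemma transfer {GZ : Type*}
    [NormedAddCommGroup GZ] [InnerProductSpace ℝ GZ] [CompleteSpace GZ]
    [SecondCountableTopology GZ] [MeasurableSpace GZ] [BorelSpace GZ]
    {HZ : Type*} [MeasurableSpace HZ]
    (P : Measure Ω) [IsProbabilityMeasure P]
    (Z : Ω → HZ) (hZ : Measurable Z) (kZ : HZ → GZ) (hkZ : Measurable kZ)
    (hm2Z : MemLp (fun ω => kZ (Z ω)) 2 P)
    (c : Ω → ℝ) (hc2 : MemLp c 2 P) (h : GZ)
    (hh : (fun ω => ⟪kZ (Z ω), h⟫) =ᵐ[P]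
      condExp (MeasurableSpace.comap Z inferInstance) P c) (w : GZ) :
    (∫ ω, ⟪kZ (Z ω), w⟫ * c ω ∂P = ∫ ω, ⟪kZ (Z ω), w⟫ * ⟪kZ (Z ω), h⟫ ∂P)
      ∧ ∫ ω, c ω ∂P = ∫ ω, ⟪kZ (Z ω), h⟫ ∂P := by
  have hle : MeasurableSpace.comap Z inferInstance ≤ _ :=
    @measurable_iff_comap_le Ω HZ _ _ Z |>.mp hZ
  set w' : Ω → ℝ := fun ω => ⟪kZ (Z ω), w⟫ with hw'_def
  have hw'sm : StronglyMeasurable[MeasurableSpace.comap Z inferInstance] w' := by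
    have hZm : Measurable[MeasurableSpace.comap Z inferInstance] Z :=
      measurable_iff_comap_le.mpr le_rfl
    exact (((continuous_id.inner (continuous_const (y := w))).measurable).comp
      (hkZ.comp hZm)).stronglyMeasurable
  have hw'2 : MemLp w' 2 P := mem2_inner hm2Z w
  have hc1 : Integrable c P := hc2.integrable one_le_two
  have hwc : Integrable (fun ω => w' ω * c ω) P := mul_int P w' c hw'2 hc2
  constructor
  · have hpull : P[fun ω => w' ω * c ω|MeasurableSpace.comap Z inferInstance]
        =ᵐ[P] fun ω => w' ω * (P[c|MeasurableSpace.comap Z inferInstance]) ω := by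
      have := condExp_mul_of_stronglyMeasurable_left (μ := P)
        (m := MeasurableSpace.comap Z inferInstance) hw'sm
        (by simpa [Pi.mul_def] using hwc) hc1
      simpa [Pi.mul_def] using this
    calc ∫ ω, w' ω * c ω ∂P
        = ∫ ω, (P[fun ω => w' ω * c ω|MeasurableSpace.comap Z inferInstance]) ω ∂P :=
          (integral_condExp (μ := P) (f := fun ω => w' ω * c ω) hle).symm
      _ = ∫ ω, w' ω * (P[c|MeasurableSpace.comap Z inferInstance]) ω ∂P :=
          integral_congr_ae hpull
      _ = ∫ ω, w' ω * ⟪kZ (Z ω), h⟫ ∂P := by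
          refine integral_congr_ae ?_
          filter_upwards [hh] with ω hω
          rw [hω]
  · calc ∫ ω, c ω ∂P = ∫ ω, (P[c|MeasurableSpace.comap Z inferInstance]) ω ∂P :=
          (integral_condExp (μ := P) (f := c) hle).symm
      _ = ∫ ω, ⟪kZ (Z ω), h⟫ ∂P := integral_congr_ae hh.symm

end Aux

theorem statement5
    (P : Measure Ω) [IsProbabilityMeasure P]
    {HX HY HZ GX GY GZ : Type*}
    [NormedAddCommGroup HX] [InnerProductSpace ℝ HX] [CompleteSpace HX]
    [SecondCountableTopology HX] [MeasurableSpace HX] [BorelSpace HX]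
    [NormedAddCommGroup HY] [InnerProductSpace ℝ HY] [CompleteSpace HY]
    [SecondCountableTopology HY] [MeasurableSpace HY] [BorelSpace HY]
    [NormedAddCommGroup HZ] [InnerProductSpace ℝ HZ] [CompleteSpace HZ]
    [SecondCountableTopology HZ] [MeasurableSpace HZ] [BorelSpace HZ]
    [NormedAddCommGroup GX] [InnerProductSpace ℝ GX] [CompleteSpace GX]
    [SecondCountableTopology GX] [MeasurableSpace GX] [BorelSpace GX]
    [NormedAddCommGroup GY] [InnerProductSpace ℝ GY] [CompleteSpace GY]
    [SecondCountableTopology GY] [MeasurableSpace GY] [BorelSpace GY]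
    [NormedAddCommGroup GZ] [InnerProductSpace ℝ GZ] [CompleteSpace GZ]
    [SecondCountableTopology GZ] [MeasurableSpace GZ] [BorelSpace GZ]
    (X : Ω → HX) (Y : Ω → HY) (Z : Ω → HZ)
    (hX : Measurable X) (hY : Measurable Y) (hZ : Measurable Z)
    (kX : HX → GX) (kY : HY → GY) (kZ : HZ → GZ)
    (hkX : Measurable kX) (hkY : Measurable kY) (hkZ : Measurable kZ)
    (hdX : (Submodule.span ℝ (Set.range kX)).topologicalClosure = ⊤)
    (hdY : (Submodule.span ℝ (Set.range kY)).topologicalClosure = ⊤)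
    (hdZ : (Submodule.span ℝ (Set.range kZ)).topologicalClosure = ⊤)
    (hmX : Integrable (fun ω => ⟪kX (X ω), kX (X ω)⟫) P)
    (hmY : Integrable (fun ω => ⟪kY (Y ω), kY (Y ω)⟫) P)
    (hmZ : Integrable (fun ω => ⟪kZ (Z ω), kZ (Z ω)⟫) P)
    (hCEX : ∀ g : GX, ∃ h : GZ,
      (fun ω => ⟪kZ (Z ω), h⟫) =ᵐ[P]
        condExp (MeasurableSpace.comap Z inferInstance) P (fun ω => ⟪kX (X ω), g⟫))
    (hCEY : ∀ g : GY, ∃ h : GZ,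
      (fun ω => ⟪kZ (Z ω), h⟫) =ᵐ[P]
        condExp (MeasurableSpace.comap Z inferInstance) P (fun ω => ⟪kY (Y ω), g⟫))
    (dag : GZ →ₗ[ℝ] GZ)
    (hdag : IsMoorePenroseInv (crossCov P kZ Z kZ Z) dag) :
    -- ⟪f, Σ_{XY|Z} g⟫ = E{Cov[f(X), g(Y) | Z]}
    ∀ (f : GX) (g : GY),
      ⟪f, crossCov P kX X kY Y g - crossCov P kX X kZ Z (dag (crossCov P kZ Z kY Y g))⟫
        = ∫ ω,
            (condExp (MeasurableSpace.comap Z inferInstance) P (fun ω' => ⟪kX (X ω'), f⟫ * ⟪kY (Y ω'), g⟫) ω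
              - condExp (MeasurableSpace.comap Z inferInstance) P (fun ω' => ⟪kX (X ω'), f⟫) ω *
                condExp (MeasurableSpace.comap Z inferInstance) P (fun ω' => ⟪kY (Y ω'), g⟫) ω) ∂P := by
  intro f g
  obtain ⟨hf, hhf⟩ := hCEX f
  obtain ⟨hg, hhg⟩ := hCEY g
  have mem2X : MemLp (fun ω => kX (X ω)) 2 P := mem2 P kX X hkX hX hmX
  have mem2Y : MemLp (fun ω => kY (Y ω)) 2 P := mem2 P kY Y hkY hY hmY
  have mem2Z : MemLp (fun ω => kZ (Z ω)) 2 P := mem2 P kZ Z hkZ hZ hmZ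
  have hle : MeasurableSpace.comap Z inferInstance ≤ _ :=
    @measurable_iff_comap_le Ω HZ _ _ Z |>.mp hZ
  set a : Ω → ℝ := fun ω => ⟪kX (X ω), f⟫ with ha_def
  set b : Ω → ℝ := fun ω => ⟪kY (Y ω), g⟫ with hb_def
  set hfZ : Ω → ℝ := fun ω => ⟪kZ (Z ω), hf⟫ with hfZ_def
  set hgZ : Ω → ℝ := fun ω => ⟪kZ (Z ω), hg⟫ with hgZ_def
  have ha2 : MemLp a 2 P := mem2_inner mem2X f
  have hb2 : MemLp b 2 P := mem2_inner mem2Y g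
  have hfZ2 : MemLp hfZ 2 P := mem2_inner mem2Z hf
  have hgZ2 : MemLp hgZ 2 P := mem2_inner mem2Z hg
  have hab : Integrable (fun ω => a ω * b ω) P := mul_int P a b ha2 hb2
  have hfg : Integrable (fun ω => hfZ ω * hgZ ω) P := mul_int P hfZ hgZ hfZ2 hgZ2
  -- transfers
  have tf := fun w => transfer P Z hZ kZ hkZ mem2Z a ha2 hf hhf w
  have tg := fun w => transfer P Z hZ kZ hkZ mem2Z b hb2 hg hhg w
  -- key 1 : Σ_ZY g = Σ_ZZ hg
  have key1 : crossCov P kZ Z kY Y g = crossCov P kZ Z kZ Z hg := by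
    refine ext_inner_left ℝ fun u => ?_
    rw [inner_crossCov P mem2Z mem2Y u g, inner_crossCov P mem2Z mem2Z u hg,
      (tg u).1, (tg u).2]
  -- key 2 : ⟪f, Σ_XZ w⟫ = ⟪hf, Σ_ZZ w⟫
  have key2 : ∀ w : GZ, ⟪f, crossCov P kX X kZ Z w⟫ = ⟪hf, crossCov P kZ Z kZ Z w⟫ := by
    intro w
    rw [inner_crossCov P mem2X mem2Z f w, inner_crossCov P mem2Z mem2Z hf w]
    have c1 : ∫ ω, a ω * ⟪kZ (Z ω), w⟫ ∂P = ∫ ω, ⟪kZ (Z ω), w⟫ * a ω ∂P := by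
      simp_rw [mul_comm]
    have c2 : ∫ ω, hfZ ω * ⟪kZ (Z ω), w⟫ ∂P = ∫ ω, ⟪kZ (Z ω), w⟫ * hfZ ω ∂P := by
      simp_rw [mul_comm]
    rw [c1, c2, (tf w).1, (tf w).2]
  -- LHS
  have lhs_eq : ⟪f, crossCov P kX X kY Y g
      - crossCov P kX X kZ Z (dag (crossCov P kZ Z kY Y g))⟫
      = (∫ ω, a ω * b ω ∂P) - ∫ ω, hfZ ω * hgZ ω ∂P := by
    rw [inner_sub_right, key1, key2, hdag.1 hg,
      inner_crossCov P mem2X mem2Y f g, inner_crossCov P mem2Z mem2Z hf hg,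
      (tf hf).2, (tg hg).2]
    ring
  rw [lhs_eq]
  -- RHS
  have hcondfg : (fun ω => (P[a|MeasurableSpace.comap Z inferInstance]) ω
      * (P[b|MeasurableSpace.comap Z inferInstance]) ω) =ᵐ[P] fun ω => hfZ ω * hgZ ω := by
    filter_upwards [hhf, hhg] with ω h1 h2
    rw [← h1, ← h2]
  have hint2 : Integrable (fun ω => (P[a|MeasurableSpace.comap Z inferInstance]) ω
      * (P[b|MeasurableSpace.comap Z inferInstance]) ω) P :=
    hfg.congr hcondfg.symm
  rw [integral_sub (integrable_condExp) hint2,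
    integral_condExp (μ := P) (f := fun ω => a ω * b ω) hle,
    integral_congr_ae hcondfg]
end
end
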